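/- Let (g_n) be a sequence in ℤ^(ℕ), written g_n = (r^n_j)_{j∈ℕ}, such that there exists a constant C > 0 with Σ_j |r^n_j| ≤ C for every n, and such that the smallest index i_n of the support of g_n (i.e. r^n_j = 0 for all j < i_n) tends to infinity as n → ∞. Then g_n → 0 in the topology τ of A_G(s). -/

import Mathlib

open Filter Topology

set_option linter.unusedVariables false

lemma key {G : Type*} [AddCommGroup G] [TopologicalSpace G] [IsTopologicalAddGroup G]
    (K : ℕ) (U : Set G) (hU : U ∈ 𝓝 (0 : G)) :
    ∃ W ∈ 𝓝 (0 : G), ∀ (f : ℕ →₀ ℤ) (x : ℕ → G), (∀ j, x j ∈ W) →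
      (f.sum fun _ r => r.natAbs) ≤ K → (f.sum fun j r => r • x j) ∈ U := by
  induction K generalizing U with
  | zero =>
    refine ⟨Set.univ, Filter.univ_mem, fun f x _ hw => ?_⟩
    have hf : f = 0 := by
      ext j
      by_contra hj
      have hjs : j ∈ f.support := Finsupp.mem_support_iff.2 hj
      have : 0 < f.sum fun _ r => r.natAbs := by
        refine Finset.sum_pos' (fun _ _ => Nat.zero_le _) ⟨j, hjs, ?_⟩
        simpa using Int.natAbs_pos.2 hj
      omega
    simp [hf, mem_of_mem_nhds hU]
  | succ K ih =>
    obtain ⟨V, hV, hVadd⟩ := exists_nhds_zero_half hU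
    obtain ⟨W, hW, hWkey⟩ := ih V hV
    refine ⟨W ∩ (V ∩ (fun y => -y) ⁻¹' V), Filter.inter_mem hW (Filter.inter_mem hV
      (by simpa using (continuous_neg.continuousAt (x := (0:G))).preimage_mem_nhds (by simpa using hV))),
      fun f x hx hw => ?_⟩
    by_cases hf : f = 0
    · simp [hf, mem_of_mem_nhds hU]
    · obtain ⟨j0, hj0⟩ := Finsupp.support_nonempty_iff.2 hf
      have hj0ne : f j0 ≠ 0 := Finsupp.mem_support_iff.1 hj0
      set σ : ℤ := if 0 < f j0 then 1 else -1 with hσ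
      set f' : ℕ →₀ ℤ := f - Finsupp.single j0 σ with hf'
      have hff' : f = f' + Finsupp.single j0 σ := by simp [hf']
      -- weight of f'
      have hsupp' : f'.support ⊆ f.support := by
        intro j hj
        rw [Finsupp.mem_support_iff] at hj ⊢
        by_cases hjj : j = j0
        · subst hjj; omega
        · simpa [hf', Finsupp.single_apply, Ne.symm hjj] using hj
      have hw' : (f'.sum fun _ r => r.natAbs) ≤ K := by
        have h1 : (f'.sum fun _ r => r.natAbs) = ∑ j ∈ f.support, (f' j).natAbs :=
          Finsupp.sum_of_support_subset _ hsupp' _ (by simp)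
        have h2 : (f.sum fun _ r => r.natAbs) = ∑ j ∈ f.support, (f j).natAbs := rfl
        have h3 : ∑ j ∈ f.support, (f' j).natAbs + 1 = ∑ j ∈ f.support, (f j).natAbs := by
          rw [← Finset.add_sum_erase _ _ hj0, ← Finset.add_sum_erase _ _ hj0]
          have htail : ∑ j ∈ f.support.erase j0, (f' j).natAbs
              = ∑ j ∈ f.support.erase j0, (f j).natAbs := by
            refine Finset.sum_congr rfl fun j hj => ?_
            have : j ≠ j0 := Finset.ne_of_mem_erase hj
            simp [hf', Finsupp.single_apply, Ne.symm this]
          have hhead : (f' j0).natAbs + 1 = (f j0).natAbs := by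
            have : f' j0 = f j0 - σ := by simp [hf']
            rw [this, hσ]
            split <;> omega
          omega
        omega
      have hsum : (f.sum fun j r => r • x j)
          = (f'.sum fun j r => r • x j) + σ • x j0 := by
        rw [hff', Finsupp.sum_add_index' (fun j => zero_smul ℤ (x j)) (fun j a b => add_smul a b (x j)),
          Finsupp.sum_single_index (zero_smul ℤ (x j0))]
      rw [hsum]
      refine hVadd _ (hWkey f' x (fun j => (hx j).1) hw') _ ?_
      rw [hσ]
      split
      · simpa using (hx j0).2.1
      · simpa using (hx j0).2.2

noncomputable section

/-- The convergent sequence `s = {0} ∪ {1/n : n ∈ ℕ}` as a subspace of `ℝ`. -/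
def sSet : Set ℝ := {x : ℝ | x = 0 ∨ ∃ n : ℕ, 0 < n ∧ x = 1 / n}

/-- The natural map `s → ℤ^(ℕ)`, sending `0 ↦ 0` and `1/n ↦ e_n = single n 1`. -/
def sMap (x : sSet) : ℕ →₀ ℤ :=
  if (x : ℝ) = 0 then 0 else Finsupp.single ⌈(1 : ℝ) / (x : ℝ)⌉₊ 1

/-- The topology of the Graev free abelian topological group `A_G(s)`, i.e. the finest
group topology on `ℤ^(ℕ)` making `sMap : s → ℤ^(ℕ)` continuous.  In Mathlib's lattice of
(group) topologies `t ≤ s` means `t` is *finer* than `s`, so the finest such group topology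
is the `sInf` of the collection of all group topologies making `sMap` continuous; this
`sInf` itself makes `sMap` continuous, since `Continuous` into `t` means
`coinduced sMap _ ≤ t.toTopologicalSpace`, a condition preserved by `sInf`. -/
def tauGT : AddGroupTopology (ℕ →₀ ℤ) :=
  sInf {t : AddGroupTopology (ℕ →₀ ℤ) | @Continuous _ _ _ t.toTopologicalSpace sMap}

/-- The topology `τ` of `A_G(s)` on `ℤ^(ℕ)`. -/
def tau : TopologicalSpace (ℕ →₀ ℤ) := tauGT.toTopologicalSpace

/-- If `g_n = (r^n_j)_j` is a sequence in `ℤ^(ℕ)` with `Σ_j |r^n_j| ≤ C` for all `n` and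
with `r^n_j = 0` for `j < i_n` where `i_n → ∞`, then `g_n → 0` in `τ`. -/
theorem tendsto_zero_in_tau (g : ℕ → (ℕ →₀ ℤ)) (i : ℕ → ℕ)
    (hsupp : ∀ n : ℕ, ∀ j : ℕ, j < i n → g n j = 0)
    (hi : Tendsto i atTop atTop)
    (C : ℝ) (hC : 0 < C) (hbound : ∀ n : ℕ, ((g n).sum fun _ r => (|r| : ℝ)) ≤ C) :
    Tendsto g atTop (@nhds _ tau 0) := by
  rw [show tau = sInf (AddGroupTopology.toTopologicalSpace ''
      {t : AddGroupTopology (ℕ →₀ ℤ) | @Continuous _ _ _ t.toTopologicalSpace sMap}) from rfl,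
    nhds_sInf]
  simp only [tendsto_iInf]
  rintro _ ⟨T, hT, rfl⟩
  letI := T.toTopologicalSpace
  haveI : IsTopologicalAddGroup (ℕ →₀ ℤ) := T.toIsTopologicalAddGroup
  -- the basis elements tend to 0
  have he : Tendsto (fun j : ℕ => Finsupp.single j (1 : ℤ)) atTop (𝓝 0) := by
    have h0 : Tendsto (fun j : ℕ => (1 : ℝ) / ((j : ℝ) + 1)) atTop (𝓝 0) :=
      tendsto_one_div_add_atTop_nhds_zero_nat
    set u : ℕ → sSet := fun j => ⟨1 / ((j : ℝ) + 1),
      Or.inr ⟨j + 1, Nat.succ_pos j, by push_cast; ring⟩⟩ with hu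
    have hu0 : Tendsto u atTop (𝓝 (⟨0, Or.inl rfl⟩ : sSet)) := by
      rw [tendsto_subtype_rng]; exact h0
    have hcomp := (hT.tendsto _).comp hu0
    have h1 : sMap (⟨0, Or.inl rfl⟩ : sSet) = 0 := by simp [sMap]
    have h2 : ∀ j : ℕ, sMap (u j) = Finsupp.single (j + 1) (1 : ℤ) := by
      intro j
      have hne : ((u j : ℝ)) ≠ 0 := by
        simp only [hu]
        positivity
      rw [sMap, if_neg hne]
      congr 1
      have : (1 : ℝ) / ((u j : ℝ)) = ((j + 1 : ℕ) : ℝ) := by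
        simp only [hu, one_div_one_div]
        push_cast; ring
      rw [this, Nat.ceil_natCast]
    rw [h1] at hcomp
    have h3 : Tendsto (fun j : ℕ => Finsupp.single (j + 1) (1 : ℤ)) atTop (𝓝 0) := by
      refine hcomp.congr fun j => ?_
      simp [Function.comp, h2 j]
    exact (tendsto_add_atTop_iff_nat 1).1 h3
  -- main argument
  rw [tendsto_def]
  intro U hU
  obtain ⟨W, hW, hWkey⟩ := key ⌈C⌉₊ U hU
  obtain ⟨N, hN⟩ := eventually_atTop.1 ((tendsto_def.mp he) W hW)
  obtain ⟨M, hM⟩ := eventually_atTop.1 (hi.eventually_ge_atTop N)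
  refine mem_of_superset (Filter.mem_atTop M) fun n hn => ?_
  set x : ℕ → (ℕ →₀ ℤ) := fun j => if N ≤ j then Finsupp.single j (1 : ℤ) else 0 with hx
  have hxW : ∀ j, x j ∈ W := by
    intro j
    by_cases h : N ≤ j
    · simpa [hx, h] using hN j h
    · simpa [hx, h] using mem_of_mem_nhds hW
  have hwn : ((g n).sum fun _ r => r.natAbs) ≤ ⌈C⌉₊ := by
    have h1 : ((((g n).sum fun _ r => r.natAbs) : ℕ) : ℝ) ≤ C := by
      have heq : (∑ j ∈ (g n).support, (((g n) j).natAbs : ℝ))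
          = ((g n).sum fun _ r => (|r| : ℝ)) := by
        rw [Finsupp.sum]
        exact Finset.sum_congr rfl fun j _ => by rw [Nat.cast_natAbs, Int.cast_abs]
      rw [Finsupp.sum, Nat.cast_sum, heq]
      exact hbound n
    have h2 : C ≤ (⌈C⌉₊ : ℝ) := Nat.le_ceil C
    exact_mod_cast h1.trans h2
  have hgn : ((g n).sum fun j r => r • x j) = g n := by
    have hc : ∀ j ∈ (g n).support, (g n j) • x j = Finsupp.single j (g n j) := by
      intro j hj
      have hji : ¬ j < i n := fun h => Finsupp.mem_support_iff.1 hj (hsupp n j h)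
      have hNj : N ≤ j := le_trans (hM n hn) (not_lt.1 hji)
      rw [hx]
      simp only [if_pos hNj, Finsupp.smul_single, smul_eq_mul, mul_one]
    rw [Finsupp.sum_congr hc, Finsupp.sum_single]
  have := hWkey (g n) x hxW hwn
  rw [hgn] at this
  exact this


end
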